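/- The cardinal B-splines satisfy the convolution recurrence B_{n+1}(x) = ∫_0^1 B_n(x - t) dt for every natural number n and every real x. -/

import Mathlib

open MeasureTheory

noncomputable def truncPow (x : ℝ) (n : ℕ) : ℝ := if 0 ≤ x then x ^ n else 0

noncomputable def findiff (m : ℕ) (f : ℝ → ℝ) (x : ℝ) : ℝ :=
  ∑ ℓ ∈ Finset.range (m + 1), (-1 : ℝ) ^ ℓ * (m.choose ℓ : ℝ) * f (x - ℓ)

noncomputable def Bspline (n : ℕ) (x : ℝ) : ℝ :=
  (1 / (n.factorial : ℝ)) * findiff (n + 1) (fun t => truncPow t n) x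

lemma truncPow_eq_indicator (n : ℕ) :
    (fun s : ℝ => truncPow s n) = Set.indicator (Set.Ici (0:ℝ)) (fun s : ℝ => s ^ n) := by
  funext s
  simp [truncPow, Set.indicator_apply]

lemma truncPow_intervalIntegrable (n : ℕ) (a b : ℝ) :
    IntervalIntegrable (fun s => truncPow s n) volume a b := by
  rw [truncPow_eq_indicator, intervalIntegrable_iff]
  rw [MeasureTheory.IntegrableOn, MeasureTheory.integrable_indicator_iff measurableSet_Ici]
  have h : IntegrableOn (fun s : ℝ => s ^ n) (Set.uIoc a b) volume :=
    (intervalIntegrable_iff.mp ((continuous_pow n).intervalIntegrable a b))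
  rw [MeasureTheory.IntegrableOn, Measure.restrict_restrict measurableSet_Ici]
  exact h.mono_set Set.inter_subset_right

lemma truncPow_nonpos {b : ℝ} (hb : b ≤ 0) (n : ℕ) : truncPow b (n + 1) = 0 := by
  rcases lt_or_eq_of_le hb with h | h
  · simp [truncPow, not_le.mpr h]
  · simp [truncPow, h]

lemma integral_truncPow (n : ℕ) : ∀ {a b : ℝ}, a ≤ b →
    ∫ s in a..b, truncPow s n = (truncPow b (n+1) - truncPow a (n+1)) / (n+1) := by
  have case1 : ∀ {a b : ℝ}, 0 ≤ a → a ≤ b →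
      ∫ s in a..b, truncPow s n = (truncPow b (n+1) - truncPow a (n+1)) / (n+1) := by
    intro a b ha hab
    have : ∫ s in a..b, truncPow s n = ∫ s in a..b, s ^ n := by
      apply intervalIntegral.integral_congr
      intro s hs
      rw [Set.uIcc_of_le hab] at hs
      have : (0:ℝ) ≤ s := le_trans ha hs.1
      simp [truncPow, this]
    rw [this, integral_pow]
    rw [truncPow, truncPow, if_pos (le_trans ha hab), if_pos ha]
  have case2 : ∀ {a b : ℝ}, a ≤ b → b ≤ 0 →
      ∫ s in a..b, truncPow s n = (truncPow b (n+1) - truncPow a (n+1)) / (n+1) := by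
    intro a b hab hb
    rw [truncPow_nonpos hb, truncPow_nonpos (le_trans hab hb)]
    have hz : ∫ s in a..b, truncPow s n = 0 := by
      rw [intervalIntegral.integral_of_le hab]
      rw [show (0:ℝ) = ∫ s in Set.Ioc a b, (0:ℝ) by simp]
      apply MeasureTheory.setIntegral_congr_ae measurableSet_Ioc
      have hne : ∀ᵐ s : ℝ, s ≠ 0 := by
        rw [MeasureTheory.ae_iff]
        simp only [ne_eq, not_not]
        convert Real.volume_singleton (a := 0) using 2
        ext; simp
      filter_upwards [hne] with s hs hmem
      have : s < 0 := lt_of_le_of_ne (le_trans hmem.2 hb) hs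
      simp [truncPow, not_le.mpr this]
    rw [hz]; ring
  intro a b hab
  rcases le_or_gt 0 a with ha | ha
  · exact case1 ha hab
  rcases le_or_gt b 0 with hb | hb
  · exact case2 hab hb
  rw [← intervalIntegral.integral_add_adjacent_intervals
        (truncPow_intervalIntegrable n a 0) (truncPow_intervalIntegrable n 0 b)]
  rw [case2 ha.le le_rfl, case1 le_rfl hb.le]
  have : truncPow (0:ℝ) (n+1) = 0 := by simp [truncPow]
  rw [this]; ring

lemma findiff_succ (m : ℕ) (f : ℝ → ℝ) (x : ℝ) :
    findiff (m+1) f x = findiff m f x - findiff m f (x-1) := by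
  unfold findiff
  rw [Finset.sum_range_succ' (n := m + 1)]
  have hpascal : ∀ i ∈ Finset.range (m + 1),
      (-1:ℝ) ^ (i+1) * ((m+1).choose (i+1) : ℝ) * f (x - (i+1 : ℕ))
      = (-1:ℝ) ^ (i+1) * (m.choose (i+1) : ℝ) * f (x - ((i+1 : ℕ) : ℝ))
        - (-1:ℝ) ^ i * (m.choose i : ℝ) * f ((x - 1) - (i : ℕ)) := by
    intro i _
    have : (m+1).choose (i+1) = m.choose i + m.choose (i+1) := Nat.choose_succ_succ m i
    rw [this]
    have harg : x - ((i+1 : ℕ) : ℝ) = (x - 1) - (i : ℕ) := by push_cast; ring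
    rw [harg]
    push_cast
    ring
  rw [Finset.sum_congr rfl hpascal, Finset.sum_sub_distrib]
  have h1 : ∑ i ∈ Finset.range (m + 1),
      (-1:ℝ) ^ (i+1) * (m.choose (i+1) : ℝ) * f (x - ((i+1 : ℕ) : ℝ))
      = ∑ ℓ ∈ Finset.range (m + 2), (-1:ℝ) ^ ℓ * (m.choose ℓ : ℝ) * f (x - ℓ)
        - (-1:ℝ) ^ 0 * (m.choose 0 : ℝ) * f (x - (0:ℕ)) := by
    rw [Finset.sum_range_succ' (n := m + 1)]
    ring
  rw [h1]
  have h2 : ∑ ℓ ∈ Finset.range (m + 2), (-1:ℝ) ^ ℓ * (m.choose ℓ : ℝ) * f (x - ℓ)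
      = ∑ ℓ ∈ Finset.range (m + 1), (-1:ℝ) ^ ℓ * (m.choose ℓ : ℝ) * f (x - ℓ) := by
    rw [Finset.sum_range_succ, Nat.choose_succ_self]
    simp
  rw [h2]
  simp
  ring

theorem Bspline_convolution_recurrence (n : ℕ) (x : ℝ) :
    Bspline (n + 1) x = ∫ t in (0:ℝ)..1, Bspline n (x - t) := by
  have key : ∀ c : ℝ, (∫ t in (0:ℝ)..1, truncPow (c - t) n)
      = (truncPow c (n+1) - truncPow (c-1) (n+1)) / (n+1) := by
    intro c
    rw [intervalIntegral.integral_comp_sub_left (fun s => truncPow s n) c, sub_zero]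
    exact integral_truncPow n (by linarith)
  have hInt : ∀ ℓ : ℕ, IntervalIntegrable
      (fun t => (-1:ℝ) ^ ℓ * ((n+1).choose ℓ : ℝ) * truncPow ((x - t) - ℓ) n) volume 0 1 := by
    intro ℓ
    have h0 : IntervalIntegrable (fun t => truncPow ((x - ℓ) - t) n) volume
        ((x - ℓ) - 0) ((x - ℓ) - 1) :=
      (truncPow_intervalIntegrable n 0 1).comp_sub_left (x - ℓ)
    have h0' : IntervalIntegrable (fun t => truncPow ((x - ℓ) - t) n) volume 0 1 := by
      have := ((truncPow_intervalIntegrable n ((x-ℓ)-0) ((x-ℓ)-1)).comp_sub_left (x - ℓ))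
      simpa using this
    have : (fun t => (-1:ℝ) ^ ℓ * ((n+1).choose ℓ : ℝ) * truncPow ((x - t) - ℓ) n)
        = fun t => (-1:ℝ) ^ ℓ * ((n+1).choose ℓ : ℝ) * truncPow ((x - ℓ) - t) n := by
      funext t; ring_nf
    rw [this]
    exact h0'.const_mul _
  have hrhs : (∫ t in (0:ℝ)..1, Bspline n (x - t))
      = (1 / (n.factorial : ℝ)) * ∑ ℓ ∈ Finset.range (n + 2),
          (-1:ℝ) ^ ℓ * ((n+1).choose ℓ : ℝ) *
            ((truncPow (x - ℓ) (n+1) - truncPow ((x - ℓ) - 1) (n+1)) / (n+1)) := by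
    simp only [Bspline, findiff]
    rw [intervalIntegral.integral_const_mul]
    congr 1
    rw [intervalIntegral.integral_finset_sum (fun ℓ _ => hInt ℓ)]
    apply Finset.sum_congr rfl
    intro ℓ _
    rw [intervalIntegral.integral_const_mul]
    congr 1
    have : (fun t => truncPow ((x - t) - ℓ) n) = fun t => truncPow ((x - ℓ) - t) n := by
      funext t; ring_nf
    rw [this, key (x - ℓ)]
  rw [hrhs]
  have hlhs : Bspline (n + 1) x = (1 / ((n+1).factorial : ℝ)) *
      (findiff (n+1) (fun t => truncPow t (n+1)) x
        - findiff (n+1) (fun t => truncPow t (n+1)) (x - 1)) := by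
    rw [Bspline, findiff_succ]
  rw [hlhs]
  simp only [findiff]
  have harg : ∀ ℓ : ℕ, x - (ℓ:ℝ) - 1 = x - 1 - (ℓ:ℝ) := fun ℓ => by ring
  simp only [harg]
  have expand : ∑ ℓ ∈ Finset.range (n+2), (-1:ℝ)^ℓ * ((n+1).choose ℓ : ℝ) *
        ((truncPow (x - ℓ) (n+1) - truncPow (x - 1 - ℓ) (n+1)) / ((n:ℝ)+1))
      = (∑ ℓ ∈ Finset.range (n+2), (-1:ℝ)^ℓ * ((n+1).choose ℓ : ℝ) * truncPow (x - ℓ) (n+1)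
        - ∑ ℓ ∈ Finset.range (n+2), (-1:ℝ)^ℓ * ((n+1).choose ℓ : ℝ) * truncPow (x - 1 - ℓ) (n+1))
        / ((n:ℝ)+1) := by
    rw [← Finset.sum_sub_distrib, Finset.sum_div]
    apply Finset.sum_congr rfl
    intro ℓ _
    ring
  rw [expand]
  have hfac : (((n+1).factorial : ℝ)) = ((n:ℝ)+1) * (n.factorial : ℝ) := by
    rw [Nat.factorial_succ]; push_cast; ring
  rw [hfac]
  have hf : (n.factorial : ℝ) ≠ 0 := Nat.cast_ne_zero.mpr n.factorial_ne_zero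
  have hn : ((n:ℝ)+1) ≠ 0 := by positivity
  have habs : ∀ D f g : ℝ, f ≠ 0 → g ≠ 0 → 1/(g*f) * D = 1/f * (D/g) := by
    intro D f g hf hg
    field_simp
  exact habs _ _ _ hf hn
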